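/- For integers n ≥ 1 and r ≥ 1 with n ≥ r, one has the coefficient identity [Z^n] ((1 - √(1-4Z))^r (1 + √(1-4Z)))/(2^{r+1} √(1-4Z)) = binom(2n - r - 1, n - 1), where the expressions are formal power series in Z over ℚ and √(1-4Z) is the formal square root with constant term 1. -/

import Mathlib

open PowerSeries

private lemma coeff_inv_W_aux (W : PowerSeries ℚ)
    (hW : W ^ 2 = 1 - 4 * PowerSeries.X)
    (hW0 : PowerSeries.constantCoeff W = 1) (m : ℕ) :
    PowerSeries.coeff m W⁻¹ = (Nat.centralBinom m : ℚ) := by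
  have hWne : constantCoeff W ≠ 0 := by rw [hW0]; exact one_ne_zero
  have hWG : W * W⁻¹ = 1 := PowerSeries.mul_inv_cancel W hWne
  have hC4 : (C 4 : ℚ⟦X⟧) = 4 := map_ofNat (C (R := ℚ)) 4
  have e1 : (d⁄dX ℚ) (W ^ 2) = 2 * (W * (d⁄dX ℚ) W) := by
    rw [pow_two, Derivation.leibniz]
    simp only [smul_eq_mul]
    ring
  have e2 : (d⁄dX ℚ) (W ^ 2) = 2 * (-2 : ℚ⟦X⟧) := by
    have h4 : (1 - 4 * X : ℚ⟦X⟧) = 1 - (C 4) * X := by rw [hC4]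
    rw [hW, h4, map_sub, Derivation.leibniz, derivative_X, derivative_C]
    simp only [Derivation.map_one_eq_zero, smul_eq_mul, mul_one, mul_zero, add_zero,
      zero_sub, hC4]
    norm_num
  have h2ne : (2 : ℚ⟦X⟧) ≠ 0 := by
    intro h
    have h' := congrArg (constantCoeff) h
    rw [map_ofNat, map_zero] at h'
    norm_num at h'
  have hWdW : W * (d⁄dX ℚ) W = -2 := mul_left_cancel₀ h2ne (e1.symm.trans e2)
  have hdW : (d⁄dX ℚ) W = -2 * W⁻¹ := by
    calc (d⁄dX ℚ) W = (W * W⁻¹) * (d⁄dX ℚ) W := by rw [hWG, one_mul]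
    _ = (W * (d⁄dX ℚ) W) * W⁻¹ := by ring
    _ = -2 * W⁻¹ := by rw [hWdW]
  have hdG : (d⁄dX ℚ) W⁻¹ = 2 * (W⁻¹) ^ 3 := by
    rw [derivative_inv', hdW]; ring
  have key : (1 - 4 * X) * (d⁄dX ℚ) W⁻¹ = 2 * W⁻¹ := by
    rw [hdG, ← hW]
    linear_combination (2 * W⁻¹ * (W * W⁻¹ + 1)) * hWG
  have hrec : ∀ k : ℕ, ((k : ℚ) + 1) * coeff (k + 1) W⁻¹
      = (4 * k + 2) * coeff k W⁻¹ := by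
    intro k
    have expand : (1 - 4 * X) * (d⁄dX ℚ) W⁻¹
        = (d⁄dX ℚ) W⁻¹ - (C 4) * (X * (d⁄dX ℚ) W⁻¹) := by rw [hC4]; ring
    have hk := congrArg (coeff k) key
    rw [expand, map_sub, coeff_C_mul, coeff_derivative] at hk
    have hXd : coeff k (X * (d⁄dX ℚ) W⁻¹) = (k : ℚ) * coeff k W⁻¹ := by
      cases k with
      | zero => simp [coeff_zero_eq_constantCoeff_apply]
      | succ j =>
        rw [coeff_succ_X_mul, coeff_derivative]
        push_cast
        ring
    rw [hXd] at hk
    have hk2 : coeff k (2 * W⁻¹) = 2 * coeff k W⁻¹ := by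
      rw [← map_ofNat (C (R := ℚ)) 2, coeff_C_mul]
    rw [hk2] at hk
    push_cast
    linarith [hk]
  induction m with
  | zero =>
    rw [coeff_zero_eq_constantCoeff_apply, PowerSeries.constantCoeff_inv, hW0]
    simp [Nat.centralBinom]
  | succ k ih =>
    have h := hrec k
    rw [ih] at h
    have hk : ((k : ℚ) + 1) ≠ 0 := by positivity
    have hcb : ((k : ℚ) + 1) * (Nat.centralBinom (k + 1) : ℚ)
        = (4 * k + 2) * (Nat.centralBinom k : ℚ) := by
      have := Nat.succ_mul_centralBinom_succ k
      have := congrArg (Nat.cast : ℕ → ℚ) this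
      push_cast at this
      linarith [this]
    exact mul_left_cancel₀ hk (h.trans hcb.symm)

private lemma vanish_aux (W : PowerSeries ℚ)
    (hW0 : PowerSeries.constantCoeff W = 1) (n r : ℕ) (h : n < r) :
    PowerSeries.coeff n ((1 - W) ^ r * (1 + W) * W⁻¹) = 0 := by
  have hX : (X : ℚ⟦X⟧) ∣ (1 - W) := by
    rw [PowerSeries.X_dvd_iff]
    simp [hW0]
  have hdvd : (X : ℚ⟦X⟧) ^ r ∣ (1 - W) ^ r * (1 + W) * W⁻¹ := by
    rw [mul_assoc]
    exact dvd_mul_of_dvd_left (pow_dvd_pow_of_dvd hX r) _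
  exact PowerSeries.X_pow_dvd_iff.mp hdvd n h

private lemma main_aux (W : PowerSeries ℚ)
    (hW : W ^ 2 = 1 - 4 * PowerSeries.X)
    (hW0 : PowerSeries.constantCoeff W = 1) :
    ∀ m n r : ℕ, 1 ≤ r → r ≤ n → 2 * n - r = m →
      PowerSeries.coeff n ((1 - W) ^ r * (1 + W) * W⁻¹)
        = 2 ^ (r + 1) * (Nat.choose (2 * n - r - 1) (n - 1) : ℚ) := by
  have hC4 : (C 4 : ℚ⟦X⟧) = 4 := map_ofNat (C (R := ℚ)) 4
  intro m
  induction m using Nat.strong_induction_on with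
  | _ m IH =>
    intro n r hr hrn hm
    rcases Nat.lt_or_ge r 2 with h2 | h2
    · -- r = 1
      have hr1 : r = 1 := by omega
      subst hr1
      obtain ⟨k, rfl⟩ : ∃ k, n = k + 1 := ⟨n - 1, by omega⟩
      have h4X : (1 - W) ^ 1 * (1 + W) * W⁻¹ = (C 4) * (X * W⁻¹) := by
        rw [pow_one, hC4]
        linear_combination (-W⁻¹) * hW
      rw [h4X, coeff_C_mul, coeff_succ_X_mul, coeff_inv_W_aux W hW hW0]
      have e1 : 2 * (k + 1) - 1 - 1 = 2 * k := by omega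
      have e2 : k + 1 - 1 = k := by omega
      rw [e1, e2]
      have : Nat.centralBinom k = Nat.choose (2 * k) k := rfl
      rw [this]
      ring
    · -- r ≥ 2
      obtain ⟨a, rfl⟩ : ∃ a, r = a + 2 := ⟨r - 2, by omega⟩
      obtain ⟨d, rfl⟩ : ∃ d, n = a + 2 + d := ⟨n - (a + 2), by omega⟩
      have key : 2 * ((1 - W) ^ (a + 2) * (1 + W) * W⁻¹)
          = (C 4) * (X * ((1 - W) ^ (a + 1) * (1 + W) * W⁻¹))
            + (1 - W) ^ (a + 3) * (1 + W) * W⁻¹ := by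
        rw [hC4]
        linear_combination (-((1 - W) ^ (a + 1) * (1 + W) * W⁻¹)) * hW
      have hkey := congrArg (coeff (a + 2 + d)) key
      have h2c : coeff (a + 2 + d) (2 * ((1 - W) ^ (a + 2) * (1 + W) * W⁻¹))
          = 2 * coeff (a + 2 + d) ((1 - W) ^ (a + 2) * (1 + W) * W⁻¹) := by
        rw [← map_ofNat (C (R := ℚ)) 2, coeff_C_mul]
      have hidx : a + 2 + d = (a + 1 + d) + 1 := by omega
      rw [h2c, map_add, coeff_C_mul, hidx, coeff_succ_X_mul, ← hidx] at hkey
      -- first term via IH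
      have ih1 : coeff (a + 1 + d) ((1 - W) ^ (a + 1) * (1 + W) * W⁻¹)
          = 2 ^ (a + 2) * (Nat.choose (2 * (a + 1 + d) - (a + 1) - 1) (a + 1 + d - 1) : ℚ) := by
        apply IH (2 * (a + 1 + d) - (a + 1)) (by omega) (a + 1 + d) (a + 1)
          (by omega) (by omega) rfl
      have e3 : 2 * (a + 1 + d) - (a + 1) - 1 = a + 2 * d := by omega
      have e4 : a + 1 + d - 1 = a + d := by omega
      rw [e3, e4] at ih1
      -- second term: IH or vanishing
      have ih2 : coeff (a + 2 + d) ((1 - W) ^ (a + 3) * (1 + W) * W⁻¹)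
          = 2 ^ (a + 4) * (Nat.choose (a + 2 * d) (a + d + 1) : ℚ) := by
        rcases Nat.eq_zero_or_pos d with hd | hd
        · subst hd
          rw [vanish_aux W hW0 _ _ (by omega)]
          have : Nat.choose (a + 2 * 0) (a + 0 + 1) = 0 :=
            Nat.choose_eq_zero_of_lt (by omega)
          rw [this]
          simp
        · have := IH (2 * (a + 2 + d) - (a + 3)) (by omega) (a + 2 + d) (a + 3)
            (by omega) (by omega) rfl
          have e5 : 2 * (a + 2 + d) - (a + 3) - 1 = a + 2 * d := by omega
          have e6 : a + 2 + d - 1 = a + d + 1 := by omega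
          rw [e5, e6] at this
          exact this
      rw [ih1, ih2] at hkey
      have e7 : 2 * (a + 2 + d) - (a + 2) - 1 = a + 2 * d + 1 := by omega
      have e8 : a + 2 + d - 1 = a + d + 1 := by omega
      rw [e7, e8]
      have pascal : Nat.choose (a + 2 * d + 1) (a + d + 1)
          = Nat.choose (a + 2 * d) (a + d) + Nat.choose (a + 2 * d) (a + d + 1) :=
        Nat.choose_succ_succ _ _
      rw [pascal]
      push_cast
      push_cast at hkey
      linear_combination (1 / 2 : ℚ) * hkey

/-- For integers `n ≥ 1` and `r ≥ 1` with `r ≤ n`, in the ring of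
formal power series `ℚ⟦Z⟧`, with `W = √(1 - 4Z)` the formal square root with constant
term `1`, one has
`[Z^n] ((1 - W)^r (1 + W))/(2^{r+1} W) = binom(2n - r - 1, n - 1)`
(the division is by the unit `2^{r+1}·W`, taken via the power-series inverse). -/
theorem coeff_dyck_ascent_gf (n r : ℕ) (hn : 1 ≤ n) (hr : 1 ≤ r) (hrn : r ≤ n)
    (W : PowerSeries ℚ)
    (hW : W ^ 2 = 1 - 4 * PowerSeries.X)
    (hW0 : PowerSeries.constantCoeff W = 1) :
    PowerSeries.coeff n (((1 - W) ^ r * (1 + W)) * (2 ^ (r + 1) * W)⁻¹) =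
      (Nat.choose (2 * n - r - 1) (n - 1) : ℚ) := by
  have hC2 : ((2 : ℚ⟦X⟧) ^ (r + 1)) = C (2 ^ (r + 1) : ℚ) := by
    rw [map_pow, map_ofNat]
  have hinv : (2 ^ (r + 1) * W : ℚ⟦X⟧)⁻¹ = C ((2 ^ (r + 1) : ℚ)⁻¹) * W⁻¹ := by
    rw [PowerSeries.mul_inv_rev, hC2, PowerSeries.C_inv]
    ring
  rw [hinv]
  have : (1 - W) ^ r * (1 + W) * (C ((2 ^ (r + 1) : ℚ)⁻¹) * W⁻¹)
      = C ((2 ^ (r + 1) : ℚ)⁻¹) * ((1 - W) ^ r * (1 + W) * W⁻¹) := by ring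
  rw [this, coeff_C_mul, main_aux W hW hW0 (2 * n - r) n r hr hrn rfl]
  have h2 : ((2 : ℚ) ^ (r + 1)) ≠ 0 := by positivity
  field_simp
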